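/- arXiv:1105.6033 — 2 statements merged into one kernel-verified Lean document; each statement's English description precedes it below -/
import Mathlib

section
/- Let (Ω, 𝓕, P) be a probability space and let X : Ω → (Fin n → ℂ) be a random vector whose coordinates X 0, …, X (n−1) are mutually independent ℂ-valued random variables, each with an atomless law. Then for every ℂ-submodule W of (Fin n → ℂ) with W ≠ ⊤ (i.e., every proper linear subspace), the probability that X ω ∈ W is zero. -/
open MeasureTheory ProbabilityTheory

/-- Appendix D of the paper: a random vector in `ℂⁿ` whose coordinates are mutually
independent random variables with atomless laws lies in any fixed proper linear subspace
with probability zero. -/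
theorem prob_mem_proper_subspace_eq_zero {Ω : Type*} [MeasurableSpace Ω]
    (P : Measure Ω) [IsProbabilityMeasure P] (n : ℕ)
    (X : Ω → Fin n → ℂ) (hX : Measurable X)
    (hInd : iIndepFun (fun i : Fin n => fun ω => X ω i) P)
    (hAtomless : ∀ i : Fin n, NoAtoms (P.map (fun ω => X ω i))) :
    ∀ W : Submodule ℂ (Fin n → ℂ), W ≠ ⊤ → P {ω | X ω ∈ W} = 0 := by
  intro W hW
  obtain ⟨φ, hφ0, hφW⟩ :=
    W.exists_dual_map_eq_bot_of_lt_top (lt_top_iff_ne_top.2 hW) inferInstance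
  have hφzero : ∀ w ∈ W, φ w = 0 := by
    intro w hw
    have : φ w ∈ W.map φ := Submodule.mem_map_of_mem hw
    simpa [hφW] using this
  set c : Fin n → ℂ := fun i => φ (fun j => if i = j then 1 else 0) with hc
  have hφeq : ∀ v : Fin n → ℂ, φ v = ∑ i, v i * c i := by
    intro v
    rw [LinearMap.pi_apply_eq_sum_univ φ v]
    simp [hc, smul_eq_mul]
  obtain ⟨j, hj⟩ : ∃ j, c j ≠ 0 := by
    by_contra h
    push_neg at h
    apply hφ0
    ext v
    simp [hφeq, h]
  classical
  -- the other coordinates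
  set S : Finset (Fin n) := {j}ᶜ with hS
  set Y : Ω → (S → ℂ) := fun ω i => X ω i with hY
  have hXi : ∀ i : Fin n, Measurable (fun ω => X ω i) :=
    fun i => (measurable_pi_apply i).comp hX
  have hYmeas : Measurable Y := measurable_pi_iff.2 fun i => hXi i
  set g : (S → ℂ) → ℂ := fun y => (-∑ i : S, y i * c i) / c j with hg
  have hgmeas : Measurable g := by
    apply Measurable.div_const
    apply Measurable.neg
    exact Finset.measurable_sum _ fun i _ => (measurable_pi_apply i).mul_const _
  -- the event is contained in a graph event
  have hsub : {ω | X ω ∈ W} ⊆ {ω | X ω j = g (Y ω)} := by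
    intro ω hω
    have h0 : ∑ i, X ω i * c i = 0 := by rw [← hφeq]; exact hφzero _ hω
    have hsplit : X ω j * c j + ∑ i ∈ Finset.univ.erase j, X ω i * c i
        = ∑ i, X ω i * c i :=
      Finset.add_sum_erase Finset.univ (fun i => X ω i * c i) (Finset.mem_univ j)
    have hSsum : ∑ i : S, Y ω i * c i = ∑ i ∈ Finset.univ.erase j, X ω i * c i := by
      rw [Finset.sum_coe_sort S (fun i => X ω i * c i)]
      congr 1
      rw [hS, Finset.compl_singleton]
    have hkey : X ω j * c j = -∑ i : S, Y ω i * c i := by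
      rw [hSsum]
      exact eq_neg_of_add_eq_zero_left (hsplit.trans h0)
    show X ω j = g (Y ω)
    simp only [hg]
    rw [← hkey, mul_div_cancel_right₀ _ hj]
  -- independence of Y and X · j
  have hIndYZ : IndepFun Y (fun ω => X ω j) P := by
    have h2 := hInd.indepFun_finset S {j}
      (by simp [hS, Finset.disjoint_singleton_right]) hXi
    have := h2.comp (measurable_id (α := S → ℂ))
      (measurable_pi_apply (⟨j, Finset.mem_singleton_self j⟩ : ({j} : Finset (Fin n))))
    exact this
  have hmap := (indepFun_iff_map_prod_eq_prod_map_map hYmeas.aemeasurable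
    (hXi j).aemeasurable).1 hIndYZ
  -- compute the measure of the graph event
  set A : Set ((S → ℂ) × ℂ) := {p | p.2 = g p.1} with hA
  have hAmeas : MeasurableSet A := measurableSet_eq_fun measurable_snd (hgmeas.comp measurable_fst)
  have hpair : Measurable (fun ω => (Y ω, X ω j)) := hYmeas.prodMk (hXi j)
  have hzero : P {ω | X ω j = g (Y ω)} = 0 := by
    have h1 : P {ω | X ω j = g (Y ω)} = (P.map (fun ω => (Y ω, X ω j))) A := by
      rw [Measure.map_apply hpair hAmeas]; rfl
    rw [h1, hmap, Measure.prod_apply hAmeas]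
    have h2 : ∀ y : S → ℂ, (Prod.mk y ⁻¹' A) = {g y} := by
      intro y; ext z; simp [hA, Set.mem_preimage]
    simp only [h2]
    simp [(hAtomless j).measure_singleton]
  exact measure_mono_null hsub hzero
end

section
/- Let (Ω, 𝓕, P) be a probability space, let M : Ω → Matrix (Fin n) (Fin n) ℂ be a random matrix, and fix an index k : Fin n. Suppose that (a) the k-th row of M, viewed as a random vector ω ↦ (M ω) k in Fin n → ℂ, is independent of the random tuple of all remaining rows of M, and (b) the entries of the k-th row are mutually independent ℂ-valued random variables, each with an atomless law. Then almost surely the k-th row of M does not belong to the ℂ-linear span of the remaining rows of M, i.e., P({ω : (M ω) k ∈ Submodule.span ℂ {(M ω) i : i ≠ k}}) = 0. -/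
open MeasureTheory ProbabilityTheory Matrix

instance matrixMeasurableSpace {m n α : Type*} [MeasurableSpace α] :
    MeasurableSpace (Matrix m n α) :=
  inferInstanceAs (MeasurableSpace (m → n → α))

/-- If `X` is a complex random variable with atomless law, independent of `Y`, and `g` is
measurable, then a.s. `X ≠ g ∘ Y`. -/
lemma aux_eq_comp_null {Ω β : Type*} [MeasurableSpace Ω] [MeasurableSpace β]
    (P : Measure Ω) [IsProbabilityMeasure P]
    {X : Ω → ℂ} {Y : Ω → β} (hX : Measurable X) (hY : Measurable Y)
    (h : IndepFun X Y P) (hA : NoAtoms (P.map X)) {g : β → ℂ} (hg : Measurable g) :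
    P {ω | X ω = g (Y ω)} = 0 := by
  have hPX : IsProbabilityMeasure (P.map X) := Measure.isProbabilityMeasure_map hX.aemeasurable
  have hPY : IsProbabilityMeasure (P.map Y) := Measure.isProbabilityMeasure_map hY.aemeasurable
  have hmap : P.map (fun ω => (Y ω, X ω)) = (P.map Y).prod (P.map X) :=
    (indepFun_iff_map_prod_eq_prod_map_map hY.aemeasurable hX.aemeasurable).mp h.symm
  have hG : MeasurableSet {p : β × ℂ | p.2 = g p.1} :=
    measurableSet_eq_fun measurable_snd (hg.comp measurable_fst)
  have h1 : {ω | X ω = g (Y ω)} = (fun ω => (Y ω, X ω)) ⁻¹' {p : β × ℂ | p.2 = g p.1} := rfl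
  rw [h1, ← Measure.map_apply (hY.prodMk hX) hG, hmap, Measure.prod_apply hG]
  have h2 : ∀ y : β, (P.map X) (Prod.mk y ⁻¹' {p : β × ℂ | p.2 = g p.1}) = 0 := by
    intro y
    have : Prod.mk y ⁻¹' {p : β × ℂ | p.2 = g p.1} = {g y} := by
      ext x; simp
    rw [this]
    haveI : NullSingletonClass (P.map X) := hA
    exact measure_singleton _
  simp only [h2]
  simp

/-- If the coordinates of a random vector are independent with atomless laws, then a.s. the
vector does not lie in any fixed proper subspace. -/
lemma aux_mem_proper_subspace_null {Ω : Type*} [MeasurableSpace Ω]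
    (P : Measure Ω) [IsProbabilityMeasure P] {n : ℕ}
    {X : Ω → Fin n → ℂ} (hX : Measurable X)
    (hInd : iIndepFun (fun j ω => X ω j) P)
    (hAtom : ∀ j, NoAtoms (P.map (fun ω => X ω j)))
    (V : Submodule ℂ (Fin n → ℂ)) (hV : V ≠ ⊤) :
    P {ω | X ω ∈ V} = 0 := by
  classical
  obtain ⟨φ, hφ0, hφV⟩ :=
    V.exists_dual_map_eq_bot_of_lt_top (lt_top_iff_ne_top.mpr hV) inferInstance
  set a : Fin n → ℂ := fun j => φ (Pi.single j 1) with ha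
  have hsum : ∀ x : Fin n → ℂ, φ x = ∑ j, x j * a j := by
    intro x
    rw [φ.pi_apply_eq_sum_univ]
    refine Finset.sum_congr rfl fun j _ => ?_
    rw [smul_eq_mul]
    congr 2
    ext j'
    simp [Pi.single_apply, eq_comm]
  have hj : ∃ j₀, a j₀ ≠ 0 := by
    by_contra hc
    push_neg at hc
    apply hφ0
    apply LinearMap.ext
    intro x
    rw [hsum x]
    simp [hc]
  obtain ⟨j₀, hj₀⟩ := hj
  set g : ({j : Fin n // j ≠ j₀} → ℂ) → ℂ :=
    fun t => (a j₀)⁻¹ * (- ∑ j : {j : Fin n // j ≠ j₀}, t j * a j) with hgdef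
  have hgm : Measurable g := by
    apply Measurable.const_mul
    apply Measurable.neg
    exact Finset.measurable_sum _ fun j _ => (measurable_pi_apply j).mul_const _
  have hXj : ∀ j, Measurable fun ω => X ω j := fun j => (measurable_pi_apply j).comp hX
  -- independence of the j₀-th coordinate from the others
  have hindep : IndepFun (fun ω => X ω j₀)
      (fun ω => fun j : {j : Fin n // j ≠ j₀} => X ω (j : Fin n)) P := by
    have h0 := hInd.indepFun_finset {j₀} {j₀}ᶜ disjoint_compl_right hXj
    have h1 : Measurable fun t : ({j₀} : Finset (Fin n)) → ℂ =>
        t ⟨j₀, Finset.mem_singleton_self j₀⟩ := measurable_pi_apply _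
    have h2 : Measurable fun t : (({j₀}ᶜ : Finset (Fin n)) : Finset (Fin n)) → ℂ =>
        fun j : {j : Fin n // j ≠ j₀} =>
          t ⟨(j : Fin n), by simp [Finset.mem_compl, j.2]⟩ :=
      measurable_pi_lambda _ fun j => measurable_pi_apply _
    exact h0.comp h1 h2
  have hsub : {ω | X ω ∈ V} ⊆ {ω | X ω j₀ =
      g (fun j : {j : Fin n // j ≠ j₀} => X ω (j : Fin n))} := by
    intro ω hω
    have hφx : φ (X ω) = 0 := by
      have : φ (X ω) ∈ V.map φ := Submodule.mem_map_of_mem hω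
      rw [hφV] at this
      simpa using this
    have h0 : ∑ j, X ω j * a j = 0 := by rw [← hsum]; exact hφx
    have hsplit : X ω j₀ * a j₀ + ∑ j ∈ Finset.univ.erase j₀, X ω j * a j = 0 := by
      rw [add_comm, Finset.sum_erase_add _ _ (Finset.mem_univ j₀)]
      exact h0
    have herase : ∑ j ∈ Finset.univ.erase j₀, X ω j * a j
        = ∑ j : {j : Fin n // j ≠ j₀}, X ω (j : Fin n) * a j := by
      apply Finset.sum_subtype
      intro x; simp [Finset.mem_erase]
    show X ω j₀ = g _
    rw [hgdef]
    simp only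
    rw [← herase, eq_comm]
    have hS : ∑ j ∈ Finset.univ.erase j₀, X ω j * a j = -(X ω j₀ * a j₀) := by
      linear_combination hsplit
    rw [hS]
    field_simp
  refine measure_mono_null hsub ?_
  have hYm' : Measurable fun ω => fun j : {j : Fin n // j ≠ j₀} => X ω (j : Fin n) :=
    measurable_pi_lambda _ fun j => hXj (j : Fin n)
  exact aux_eq_comp_null P (hXj j₀) hYm' hindep (hAtom j₀) hgm

/-- Membership of a vector in the span of a finite family is a measurable condition
jointly in the family and the vector. -/
lemma aux_measurableSet_mem_span {ι : Type*} [Fintype ι] (n : ℕ) :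
    MeasurableSet {p : (ι → Fin n → ℂ) × (Fin n → ℂ) |
      p.2 ∈ Submodule.span ℂ (Set.range p.1)} := by
  classical
  set D : ℕ → ℂ := TopologicalSpace.denseSeq ℂ with hDdef
  have hD : DenseRange D := TopologicalSpace.denseRange_denseSeq ℂ
  have key : {p : (ι → Fin n → ℂ) × (Fin n → ℂ) | p.2 ∈ Submodule.span ℂ (Set.range p.1)}
      = ⋂ m : ℕ, ⋃ c : ι → ℕ,
        {p : (ι → Fin n → ℂ) × (Fin n → ℂ) |
          ‖p.2 - ∑ i, D (c i) • p.1 i‖ < 1 / (m + 1)} := by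
    ext ⟨y, x⟩
    simp only [Set.mem_setOf_eq, Set.mem_iInter, Set.mem_iUnion]
    constructor
    · intro hx m
      obtain ⟨c, hc⟩ := (Submodule.mem_span_range_iff_exists_fun ℂ).mp hx
      set B : ℝ := ∑ i, ‖y i‖ + 1 with hB
      have hBpos : 0 < B := by
        have : (0:ℝ) ≤ ∑ i, ‖y i‖ := Finset.sum_nonneg fun i _ => norm_nonneg _
        linarith
      have hmpos : (0:ℝ) < 1 / (m + 1) := by positivity
      have hεpos : (0:ℝ) < 1 / (m + 1) / B := by positivity
      have hchoice : ∀ i : ι, ∃ k : ℕ, dist (c i) (D k) < 1 / (m + 1) / B := fun i =>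
        hD.exists_dist_lt (c i) hεpos
      choose d hd using hchoice
      refine ⟨d, ?_⟩
      have hxe : x - ∑ i, D (d i) • y i = ∑ i, (c i - D (d i)) • y i := by
        rw [← hc]
        rw [← Finset.sum_sub_distrib]
        congr 1
        ext i
        rw [sub_smul]
      rw [hxe]
      calc ‖∑ i, (c i - D (d i)) • y i‖
          ≤ ∑ i, ‖(c i - D (d i)) • y i‖ := norm_sum_le _ _
        _ = ∑ i, ‖c i - D (d i)‖ * ‖y i‖ := by simp [norm_smul]
        _ ≤ ∑ i, (1 / (m + 1) / B) * ‖y i‖ := by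
            apply Finset.sum_le_sum
            intro i _
            apply mul_le_mul_of_nonneg_right _ (norm_nonneg _)
            rw [← dist_eq_norm]
            exact (hd i).le
        _ = (1 / (m + 1) / B) * ∑ i, ‖y i‖ := by rw [← Finset.mul_sum]
        _ < (1 / (m + 1) / B) * B := by
            apply mul_lt_mul_of_pos_left _ hεpos
            rw [hB]; linarith
        _ = 1 / (m + 1) := by field_simp
    · intro h
      have hfin : FiniteDimensional ℂ (Submodule.span ℂ (Set.range y)) :=
        FiniteDimensional.span_of_finite ℂ (Set.finite_range y)
      have hcl : IsClosed ((Submodule.span ℂ (Set.range y) : Submodule ℂ (Fin n → ℂ)) :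
          Set (Fin n → ℂ)) := Submodule.closed_of_finiteDimensional _
      have : x ∈ closure ((Submodule.span ℂ (Set.range y) : Submodule ℂ (Fin n → ℂ)) :
          Set (Fin n → ℂ)) := by
        rw [Metric.mem_closure_iff]
        intro ε hε
        obtain ⟨m, hm⟩ := exists_nat_one_div_lt hε
        obtain ⟨c, hc⟩ := h m
        refine ⟨∑ i, D (c i) • y i, ?_, ?_⟩
        · exact Submodule.sum_mem _ fun i _ =>
            Submodule.smul_mem _ _ (Submodule.subset_span (Set.mem_range_self i))
        · rw [dist_eq_norm]
          exact hc.trans hm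
      rwa [hcl.closure_eq] at this
  rw [key]
  refine MeasurableSet.iInter fun m => MeasurableSet.iUnion fun c => ?_
  have hcont : Continuous fun p : (ι → Fin n → ℂ) × (Fin n → ℂ) =>
      ‖p.2 - ∑ i, D (c i) • p.1 i‖ := by
    apply Continuous.norm
    apply Continuous.sub continuous_snd
    apply continuous_finset_sum
    intro i _
    exact Continuous.const_smul (g := fun a : (ι → Fin n → ℂ) × (Fin n → ℂ) => a.1 i)
      ((continuous_apply i).comp continuous_fst) (D (c i))
  exact (isOpen_lt hcont continuous_const).measurableSet

/-- The core step of Lemma 5 of the paper (Appendix D): if the `k`-th row of a random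
`n × n` complex matrix `M` is independent of the tuple of the remaining rows, and the
entries of the `k`-th row are mutually independent with atomless laws, then almost surely
the `k`-th row does not lie in the linear span of the remaining rows. -/
theorem row_not_in_span_of_indep_atomless {Ω : Type*} [MeasurableSpace Ω]
    (P : Measure Ω) [IsProbabilityMeasure P] (n : ℕ)
    (M : Ω → Matrix (Fin n) (Fin n) ℂ) (hM : Measurable M) (k : Fin n)
    (hRowIndep : IndepFun (fun ω => M ω k)
      (fun ω => fun i : {i : Fin n // i ≠ k} => M ω (i : Fin n)) P)
    (hEntInd : iIndepFun
      (fun j : Fin n => fun ω => M ω k j) P)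
    (hAtomless : ∀ j : Fin n, NoAtoms (P.map (fun ω => M ω k j))) :
    P {ω | M ω k ∈ Submodule.span ℂ ((fun i : Fin n => M ω i) '' {i | i ≠ k})} = 0 := by
  classical
  set X : Ω → Fin n → ℂ := fun ω => M ω k with hXdef
  set Y : Ω → {i : Fin n // i ≠ k} → Fin n → ℂ :=
    fun ω => fun i : {i : Fin n // i ≠ k} => M ω (i : Fin n) with hYdef
  have hMpi : Measurable (fun ω => (M ω : Fin n → Fin n → ℂ)) := hM
  have hXm : Measurable X := (measurable_pi_apply k).comp hMpi
  have hYm : Measurable Y :=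
    measurable_pi_lambda _ fun i => (measurable_pi_apply (i : Fin n)).comp hMpi
  have hPX : IsProbabilityMeasure (P.map X) := Measure.isProbabilityMeasure_map hXm.aemeasurable
  have hPY : IsProbabilityMeasure (P.map Y) := Measure.isProbabilityMeasure_map hYm.aemeasurable
  have hE := aux_measurableSet_mem_span (ι := {i : Fin n // i ≠ k}) n
  have hset : {ω | M ω k ∈ Submodule.span ℂ ((fun i : Fin n => M ω i) '' {i | i ≠ k})}
      = (fun ω => (Y ω, X ω)) ⁻¹' {p : ({i : Fin n // i ≠ k} → Fin n → ℂ) × (Fin n → ℂ) |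
          p.2 ∈ Submodule.span ℂ (Set.range p.1)} := by
    ext ω
    simp only [Set.mem_setOf_eq, Set.mem_preimage]
    rw [Set.image_eq_range]
    rfl
  have hmap : P.map (fun ω => (Y ω, X ω)) = (P.map Y).prod (P.map X) :=
    (indepFun_iff_map_prod_eq_prod_map_map hYm.aemeasurable hXm.aemeasurable).mp
      hRowIndep.symm
  rw [hset, ← Measure.map_apply (hYm.prodMk hXm) hE, hmap, Measure.prod_apply hE]
  have hslice : ∀ y : {i : Fin n // i ≠ k} → Fin n → ℂ,
      (P.map X) ((Submodule.span ℂ (Set.range y) :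
        Submodule ℂ (Fin n → ℂ)) : Set (Fin n → ℂ)) = 0 := by
    intro y
    have hfin : FiniteDimensional ℂ (Submodule.span ℂ (Set.range y)) :=
      FiniteDimensional.span_of_finite ℂ (Set.finite_range y)
    have hmeasV : MeasurableSet ((Submodule.span ℂ (Set.range y) :
        Submodule ℂ (Fin n → ℂ)) : Set (Fin n → ℂ)) :=
      (Submodule.closed_of_finiteDimensional _).measurableSet
    rw [Measure.map_apply hXm hmeasV]
    have hne : Submodule.span ℂ (Set.range y) ≠ (⊤ : Submodule ℂ (Fin n → ℂ)) := by
      have hrange : (Set.range y).toFinset.card < Module.finrank ℂ (Fin n → ℂ) := by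
        rw [Module.finrank_fin_fun]
        have h1 : (Set.range y).toFinset.card ≤ Fintype.card {i : Fin n // i ≠ k} := by
          rw [Set.toFinset_card]
          exact Fintype.card_range_le y
        have h2 : Fintype.card {i : Fin n // i ≠ k} = n - 1 := by
          rw [Fintype.card_subtype_compl, Fintype.card_subtype_eq, Fintype.card_fin]
        have h3 : 0 < n := k.pos
        omega
      exact (span_lt_top_of_card_lt_finrank hrange).ne
    exact aux_mem_proper_subspace_null P hXm hEntInd hAtomless _ hne
  simp [hslice]
end
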